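/- arXiv:math/0702403 — 3 statements merged into one kernel-verified Lean document; each statement's English description precedes it below -/
import Mathlib

section
/- Let μ be a probability measure, h a probability density with respect to μ (h ≥ 0, ∫ h dμ = 1), and H = Ent_μ(h). If K ≥ e² and log K ≥ 4H, then ∫ h · 1_{h > K} dμ ≤ 2H / log K, and consequently ∫ h · 1_{h ≤ K} dμ ≥ 1/2. -/
open MeasureTheory Real

/-- Truncation bounds for a probability density with finite entropy:
if `K ≥ e²` and `log K ≥ 4H` where `H = ∫ h log h dμ`, then
`∫ h 1_{h>K} dμ ≤ 2H/log K` and `∫ h 1_{h≤K} dμ ≥ 1/2`. -/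
theorem truncation_bounds {Ω : Type*} [MeasurableSpace Ω] (μ : Measure Ω)
    [IsProbabilityMeasure μ] (h : Ω → ℝ) (hmeas : Measurable h)
    (h0 : ∀ x, 0 ≤ h x) (hint : ∫ x, h x ∂μ = 1)
    (hent : Integrable (fun x => h x * Real.log (h x)) μ)
    (H : ℝ) (hH : H = ∫ x, h x * Real.log (h x) ∂μ)
    (K : ℝ) (hK : Real.exp 2 ≤ K) (hKH : 4 * H ≤ Real.log K) :
    (∫ x, Set.indicator {y | K < h y} h x ∂μ ≤ 2 * H / Real.log K) ∧
    (1 / 2 ≤ ∫ x, Set.indicator {y | h y ≤ K} h x ∂μ) := by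
  have hKpos : (0:ℝ) < K := lt_of_lt_of_le (Real.exp_pos 2) hK
  have hlogK : (2:ℝ) ≤ Real.log K := by
    have := Real.log_le_log (Real.exp_pos 2) hK
    rwa [Real.log_exp] at this
  have hInt : Integrable h μ := by
    by_contra hc
    rw [integral_undef hc] at hint
    norm_num at hint
  -- u = h log h - h + 1 ≥ 0
  set u : Ω → ℝ := fun x => h x * Real.log (h x) - h x + 1 with hu_def
  have hu0 : ∀ x, 0 ≤ u x := by
    intro x
    rcases eq_or_lt_of_le (h0 x) with h1 | h1
    · simp [hu_def, ← h1]
    · have : Real.log (1 / h x) ≤ 1 / h x - 1 :=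
        Real.log_le_sub_one_of_pos (by positivity)
      rw [Real.log_div one_ne_zero (ne_of_gt h1), Real.log_one] at this
      have h2 : h x - 1 ≤ h x * Real.log (h x) := by
        have := mul_le_mul_of_nonneg_left this (le_of_lt h1)
        have hne : h x ≠ 0 := ne_of_gt h1
        field_simp at this
        nlinarith [this]
      simp only [hu_def]
      linarith
  have huInt : Integrable u μ := by
    exact (hent.sub hInt).add (integrable_const 1)
  have huH : ∫ x, u x ∂μ = H := by
    simp only [hu_def]
    have hi1 : Integrable (fun x => h x * Real.log (h x) - h x) μ := hent.sub hInt
    rw [integral_add hi1 (integrable_const 1), integral_sub hent hInt, hint, integral_const]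
    simp [hH]
  have hHnn : 0 ≤ H := huH ▸ integral_nonneg hu0
  set S : Set Ω := {y | K < h y} with hS_def
  have hSmeas : MeasurableSet S := measurableSet_lt measurable_const hmeas
  set f : Ω → ℝ := Set.indicator S h with hf_def
  have hfInt : Integrable f μ := hInt.indicator hSmeas
  -- pointwise: f x * (log K - 1) ≤ u x
  have key : ∀ x, f x * (Real.log K - 1) ≤ u x := by
    intro x
    by_cases hx : x ∈ S
    · have hxK : K < h x := hx
      have hlog : Real.log K ≤ Real.log (h x) := Real.log_le_log hKpos hxK.le
      have : h x * Real.log K ≤ h x * Real.log (h x) :=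
        mul_le_mul_of_nonneg_left hlog (h0 x)
      simp only [hf_def, Set.indicator_of_mem hx, hu_def]
      nlinarith
    · simp only [hf_def, Set.indicator_of_notMem hx, hu_def, zero_mul]
      exact hu0 x
  set A : ℝ := ∫ x, f x ∂μ with hA_def
  have hAnn : 0 ≤ A := integral_nonneg fun x => Set.indicator_apply_nonneg (fun _ => h0 x)
  have hmain : A * (Real.log K - 1) ≤ H := by
    have := integral_mono (hfInt.mul_const (Real.log K - 1)) huInt key
    rwa [integral_mul_const, huH] at this
  have hbound : A ≤ 2 * H / Real.log K := by
    rw [le_div_iff₀ (by linarith : (0:ℝ) < Real.log K)]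
    nlinarith
  constructor
  · exact hbound
  · -- indicator of complement: g = h - f pointwise
    have hsplit : ∀ x, Set.indicator {y | h y ≤ K} h x = h x - f x := by
      intro x
      by_cases hx : h x ≤ K
      · have hx' : x ∉ S := by simp [hS_def, not_lt.mpr hx]
        simp [Set.indicator_of_mem (show x ∈ {y | h y ≤ K} from hx), hf_def,
          Set.indicator_of_notMem hx']
      · have hx' : x ∈ S := by simp [hS_def]; linarith [lt_of_not_ge hx]
        simp [Set.indicator_of_notMem (show x ∉ {y | h y ≤ K} from hx), hf_def,
          Set.indicator_of_mem hx']
    have : ∫ x, Set.indicator {y | h y ≤ K} h x ∂μ = 1 - A := by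
      rw [show (fun x => Set.indicator {y | h y ≤ K} h x) = fun x => h x - f x from
        funext hsplit, integral_sub hInt hfInt, hint]
    rw [this]
    have hA2 : A ≤ 1 / 2 := by
      have h1 : 2 * H / Real.log K ≤ 1 / 2 := by
        rw [div_le_div_iff₀ (by linarith : (0:ℝ) < Real.log K) (by norm_num : (0:ℝ) < 2)]
        linarith
      linarith
    linarith
end

section
/- Let μ be a probability measure on ℤ (or ℕ) with μ(x) = (1/Z) exp(−x^α) for α ∈ (0,1). Then there exist constants k ≥ 1 such that for all x ≥ 1: (1/k) x^{1−α} exp(−x^α) ≤ Σ_{y ≥ x} μ(y) ≤ k x^{1−α} exp(−x^α). -/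
open Real

open Filter Asymptotics

set_option maxHeartbeats 1000000

lemma sumexp_aux {α c : ℝ} (hα : 0 < α) (hc : 0 < c) :
    Summable (fun n : ℕ => Real.exp (-(c * (n:ℝ) ^ α))) := by
  have h1 : (fun x : ℝ => Real.exp (-c * x)) =o[atTop] fun x : ℝ => x ^ (-2/α) :=
    isLittleO_exp_neg_mul_rpow_atTop hc _
  have h2 : Tendsto (fun n : ℕ => ((n:ℝ)) ^ α) atTop atTop :=
    (tendsto_rpow_atTop hα).comp tendsto_natCast_atTop_atTop
  have h3 := (h1.comp_tendsto h2).isBigO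
  have h4 : (fun n : ℕ => Real.exp (-(c * (n:ℝ) ^ α))) =O[atTop]
      fun n : ℕ => (n:ℝ) ^ (-2 : ℝ) := by
    have e : ∀ n : ℕ, ((n:ℝ) ^ α) ^ (-2/α) = (n:ℝ) ^ (-2 : ℝ) := by
      intro n
      rw [← Real.rpow_mul (Nat.cast_nonneg n)]
      congr 1
      field_simp
    calc (fun n : ℕ => Real.exp (-(c * (n:ℝ) ^ α)))
        =O[atTop] (fun n : ℕ => ((n:ℝ) ^ α) ^ (-2/α)) := by
          simpa [neg_mul, Function.comp_def] using h3
      _ =O[atTop] (fun n : ℕ => (n:ℝ) ^ (-2:ℝ)) := by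
          apply Asymptotics.IsBigO.of_bound 1
          filter_upwards with n
          rw [e n]; simp
  exact summable_of_isBigO_nat (Real.summable_nat_rpow.2 (by norm_num : (-2:ℝ) < -1)) h4

lemma bern_upper {α a b : ℝ} (hα0 : 0 ≤ α) (hα1 : α ≤ 1) (ha : 0 < a) (hb : 0 ≤ b) :
    (a + b) ^ α ≤ a ^ α + α * a ^ (α - 1) * b := by
  have hba : (0:ℝ) ≤ b / a := div_nonneg hb ha.le
  have h := rpow_one_add_le_one_add_mul_self (s := b / a) (by linarith) hα0 hα1
  calc (a + b) ^ α = (a * (1 + b / a)) ^ α := by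
        rw [mul_add, mul_one, mul_div_cancel₀ _ ha.ne']
    _ = a ^ α * (1 + b / a) ^ α := Real.mul_rpow ha.le (by linarith)
    _ ≤ a ^ α * (1 + α * (b / a)) := by
        exact mul_le_mul_of_nonneg_left h (Real.rpow_nonneg ha.le α)
    _ = a ^ α + α * a ^ (α - 1) * b := by
        rw [Real.rpow_sub ha, Real.rpow_one]
        field_simp

lemma bern_lower {α a b : ℝ} (hα0 : 0 ≤ α) (hα1 : α ≤ 1) (ha : 0 < a) (hb : 0 ≤ b) :
    a ^ α + α * b * (a + b) ^ (α - 1) ≤ (a + b) ^ α := by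
  set c := a + b with hc
  have hcpos : 0 < c := by positivity
  have hbc : b / c ≤ 1 := (div_le_one hcpos).2 (by simp [hc]; linarith)
  have hbc0 : (0:ℝ) ≤ b / c := div_nonneg hb hcpos.le
  have h := rpow_one_add_le_one_add_mul_self (s := -(b / c)) (by linarith) hα0 hα1
  have key : a ^ α ≤ c ^ α * (1 - α * (b / c)) := by
    calc a ^ α = (c * (1 + -(b / c))) ^ α := by
          rw [mul_add, mul_one, mul_neg, mul_div_cancel₀ _ hcpos.ne']
          ring_nf
          simp [hc]
      _ = c ^ α * (1 + -(b / c)) ^ α := Real.mul_rpow hcpos.le (by linarith)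
      _ ≤ c ^ α * (1 + α * -(b / c)) :=
          mul_le_mul_of_nonneg_left h (Real.rpow_nonneg hcpos.le α)
      _ = c ^ α * (1 - α * (b / c)) := by ring
  have hcc : c ^ α * (α * (b / c)) = α * b * c ^ (α - 1) := by
    rw [Real.rpow_sub hcpos, Real.rpow_one]
    field_simp
  nlinarith [key, hcc]

lemma one_sub_exp_bounds {s : ℝ} (hs0 : 0 < s) (hs1 : s ≤ 1) :
    s / 2 ≤ 1 - Real.exp (-s) := by
  have hes : Real.exp (-s) * Real.exp s = 1 := by rw [← Real.exp_add]; simp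
  have h1s : 1 + s ≤ Real.exp s := by linarith [Real.add_one_le_exp s]
  have hp := Real.exp_pos (-s)
  nlinarith [sq_nonneg s, mul_le_mul_of_nonneg_left h1s hp.le]

/-- Discrete Laplace-type tail estimate: for `μ(x) = exp(−x^α)/Z` on `ℕ` with
`α ∈ (0,1)`, the tail `Σ_{y ≥ x} μ(y)` is comparable to `x^{1−α} exp(−x^α)`. -/
theorem tail_estimate (α : ℝ) (hα : α ∈ Set.Ioo (0:ℝ) 1)
    (Z : ℝ) (hZ : Z = ∑' n : ℕ, Real.exp (-(n : ℝ) ^ α))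
    (μ : ℕ → ℝ) (hμ : ∀ n, μ n = Real.exp (-(n : ℝ) ^ α) / Z) :
    ∃ k ≥ (1:ℝ), ∀ x : ℕ, 1 ≤ x →
      (1 / k) * (x : ℝ) ^ (1 - α) * Real.exp (-(x : ℝ) ^ α) ≤ (∑' n : ℕ, μ (x + n)) ∧
      (∑' n : ℕ, μ (x + n)) ≤ k * (x : ℝ) ^ (1 - α) * Real.exp (-(x : ℝ) ^ α) := by
  obtain ⟨hα0, hα1⟩ := hα
  have hsum1 : Summable (fun n : ℕ => Real.exp (-(n:ℝ) ^ α)) := by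
    simpa using sumexp_aux hα0 one_pos
  have hZpos : 0 < Z := by
    rw [hZ]
    exact Summable.tsum_pos hsum1 (fun n => (Real.exp_pos _).le) 0 (Real.exp_pos _)
  set C : ℝ := ∑' n : ℕ, Real.exp (-(α/2 * (n:ℝ) ^ α)) with hCdef
  have hCsum : Summable (fun n : ℕ => Real.exp (-(α/2 * (n:ℝ) ^ α))) :=
    sumexp_aux hα0 (by linarith)
  have hC0 : 0 ≤ C := tsum_nonneg fun n => (Real.exp_pos _).le
  refine ⟨max 1 (max (Z * α) ((4/α + C)/Z)), le_max_left _ _, ?_⟩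
  set k := max 1 (max (Z * α) ((4/α + C)/Z)) with hk
  have hk1 : (1:ℝ) ≤ k := le_max_left _ _
  have hkZα : Z * α ≤ k := le_trans (le_max_left _ _) (le_max_right _ _)
  have hkC : (4/α + C)/Z ≤ k := le_trans (le_max_right _ _) (le_max_right _ _)
  intro x hx
  set X := (x:ℝ) with hXdef
  have hX1 : (1:ℝ) ≤ X := by rw [hXdef]; exact_mod_cast hx
  have hX0 : 0 < X := by linarith
  have hSsum : Summable (fun n : ℕ => Real.exp (-(X + n) ^ α)) := by
    refine Summable.of_nonneg_of_le (fun n => (Real.exp_pos _).le) (fun n => ?_) hsum1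
    refine Real.exp_le_exp.2 (neg_le_neg ?_)
    exact Real.rpow_le_rpow (Nat.cast_nonneg n) (by linarith [Nat.cast_nonneg (α := ℝ) n]) hα0.le
  have hμt : (∑' n : ℕ, μ (x + n)) = (∑' n : ℕ, Real.exp (-(X + n) ^ α)) / Z := by
    have hcast : ∀ n : ℕ, ((x + n : ℕ) : ℝ) = X + n := by intro n; push_cast; ring
    simp_rw [hμ, hcast]
    exact tsum_div_const
  set S : ℝ := ∑' n : ℕ, Real.exp (-(X + n) ^ α) with hSdef
  set t := α * X ^ (α - 1) with ht
  have hXα1 : X ^ (α - 1) ≤ 1 := Real.rpow_le_one_of_one_le_of_nonpos hX1 (by linarith)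
  have hXαpos : 0 < X ^ (α - 1) := Real.rpow_pos_of_pos hX0 _
  have ht0 : 0 < t := by positivity
  have ht1 : t ≤ α := by nlinarith
  have hXX : X ^ (α - 1) * X ^ (1 - α) = 1 := by
    rw [← Real.rpow_add hX0]; norm_num
  have hX1αpos : 0 < X ^ (1 - α) := Real.rpow_pos_of_pos hX0 _
  have hX1α : (1:ℝ) ≤ X ^ (1 - α) := by nlinarith
  have htinv : X ^ (1 - α) / α = 1 / t := by
    rw [ht, eq_div_iff (by positivity)]
    field_simp
    nlinarith [hXX]
  have hgeo : ∀ s : ℝ, 0 < s → Summable (fun n : ℕ => Real.exp (-s) ^ n) :=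
    fun s hs => summable_geometric_of_lt_one (Real.exp_pos _).le
      (Real.exp_lt_one_iff.2 (by linarith))
  -- lower bound on S
  have lowerS : Real.exp (-X ^ α) * (X ^ (1 - α) / α) ≤ S := by
    have hsum := (hgeo t ht0).mul_left (Real.exp (-X ^ α))
    have step1 : Real.exp (-X ^ α) * ∑' n : ℕ, Real.exp (-t) ^ n ≤ S := by
      rw [← tsum_mul_left]
      refine Summable.tsum_le_tsum (fun n => ?_) hsum hSsum
      have hb := bern_upper hα0.le hα1.le hX0 (Nat.cast_nonneg (α := ℝ) n)
      rw [← Real.exp_nat_mul, ← Real.exp_add]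
      refine Real.exp_le_exp.2 ?_
      rw [ht] at *
      have hn0 : (0:ℝ) ≤ n := Nat.cast_nonneg n
      nlinarith [hb]
    have step2 : (∑' n : ℕ, Real.exp (-t) ^ n) = (1 - Real.exp (-t))⁻¹ :=
      tsum_geometric_of_lt_one (Real.exp_pos _).le (Real.exp_lt_one_iff.2 (by linarith))
    have h1 : 1 - Real.exp (-t) ≤ t := by nlinarith [Real.add_one_le_exp (-t)]
    have h2 : 0 < 1 - Real.exp (-t) := by
      have := Real.exp_lt_one_iff.2 (show -t < 0 by linarith)
      linarith
    have h3 : X ^ (1 - α) / α ≤ (1 - Real.exp (-t))⁻¹ := by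
      rw [htinv, one_div]
      exact inv_anti₀ h2 h1
    calc Real.exp (-X ^ α) * (X ^ (1 - α) / α)
        ≤ Real.exp (-X ^ α) * (1 - Real.exp (-t))⁻¹ :=
          mul_le_mul_of_nonneg_left h3 (Real.exp_pos _).le
      _ = Real.exp (-X ^ α) * ∑' n : ℕ, Real.exp (-t) ^ n := by rw [step2]
      _ ≤ S := step1
  -- upper bound on S
  have upperS : S ≤ Real.exp (-X ^ α) * ((4/α + C) * X ^ (1 - α)) := by
    have hterm : ∀ n : ℕ, Real.exp (-(X + n) ^ α) ≤
        Real.exp (-X ^ α) * (Real.exp (-(t/2)) ^ n + Real.exp (-(α/2 * (n:ℝ) ^ α))) := by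
      intro n
      have hb := bern_lower hα0.le hα1.le hX0 (Nat.cast_nonneg (α := ℝ) n)
      rcases le_or_gt (n:ℝ) X with hn | hn
      · have h2X : (1/2) * X ^ (α - 1) ≤ (X + n) ^ (α - 1) := by
          have e1 : (X + n) ^ (α - 1) ≥ (2 * X) ^ (α - 1) :=
            Real.rpow_le_rpow_of_nonpos (by positivity) (by linarith) (by linarith)
          have e2 : ((2:ℝ) * X) ^ (α - 1) = (2:ℝ) ^ (α - 1) * X ^ (α - 1) :=
            Real.mul_rpow (by norm_num) hX0.le
          have e3 : ((2:ℝ)) ^ (-1 : ℝ) ≤ (2:ℝ) ^ (α - 1) :=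
            Real.rpow_le_rpow_of_exponent_le (by norm_num) (by linarith)
          have e4 : ((2:ℝ)) ^ (-1 : ℝ) = 1/2 := by
            rw [Real.rpow_neg_one]; norm_num
          have e5 := mul_le_mul_of_nonneg_right e3 hXαpos.le
          calc (1/2) * X ^ (α - 1) = ((2:ℝ)) ^ (-1 : ℝ) * X ^ (α - 1) := by rw [e4]
            _ ≤ ((2:ℝ)) ^ (α - 1) * X ^ (α - 1) := e5
            _ = (2 * X) ^ (α - 1) := e2.symm
            _ ≤ (X + n) ^ (α - 1) := e1
        have key : X ^ α + (t/2) * n ≤ (X + n) ^ α := by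
          rw [ht]
          have e6 : α * n * ((1/2) * X ^ (α - 1)) ≤ α * n * (X + n) ^ (α - 1) :=
            mul_le_mul_of_nonneg_left h2X (by positivity)
          linarith
        have h5 : Real.exp (-(X + n) ^ α) ≤ Real.exp (-X ^ α) * Real.exp (-(t/2)) ^ n := by
          rw [← Real.exp_nat_mul, ← Real.exp_add]
          refine Real.exp_le_exp.2 ?_
          have e : -X ^ α + (n:ℝ) * -(t/2) = -(X ^ α + (t/2) * n) := by ring
          rw [e]
          linarith
        nlinarith [Real.exp_pos (-(α/2 * (n:ℝ) ^ α)), Real.exp_pos (-X ^ α)]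
      · have hn0 : (0:ℝ) < n := by linarith
        have h2n : (1/2) * (n:ℝ) ^ (α - 1) ≤ (X + n) ^ (α - 1) := by
          have e1 : (X + n) ^ (α - 1) ≥ (2 * n) ^ (α - 1) :=
            Real.rpow_le_rpow_of_nonpos (by positivity) (by linarith) (by linarith)
          have e2 : ((2:ℝ) * n) ^ (α - 1) = (2:ℝ) ^ (α - 1) * (n:ℝ) ^ (α - 1) :=
            Real.mul_rpow (by norm_num) hn0.le
          have e3 : ((2:ℝ)) ^ (-1 : ℝ) ≤ (2:ℝ) ^ (α - 1) :=
            Real.rpow_le_rpow_of_exponent_le (by norm_num) (by linarith)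
          have e4 : ((2:ℝ)) ^ (-1 : ℝ) = 1/2 := by
            rw [Real.rpow_neg_one]; norm_num
          have e5 := mul_le_mul_of_nonneg_right e3 (Real.rpow_pos_of_pos hn0 (α - 1)).le
          calc (1/2) * (n:ℝ) ^ (α - 1) = ((2:ℝ)) ^ (-1 : ℝ) * (n:ℝ) ^ (α - 1) := by rw [e4]
            _ ≤ ((2:ℝ)) ^ (α - 1) * (n:ℝ) ^ (α - 1) := e5
            _ = (2 * (n:ℝ)) ^ (α - 1) := e2.symm
            _ ≤ (X + n) ^ (α - 1) := e1
        have hnn : (n:ℝ) * (n:ℝ) ^ (α - 1) = (n:ℝ) ^ α := by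
          nth_rewrite 1 [← Real.rpow_one (n:ℝ)]
          rw [← Real.rpow_add hn0]; norm_num
        have key : X ^ α + α/2 * (n:ℝ) ^ α ≤ (X + n) ^ α := by
          have e6 : α * n * ((1/2) * (n:ℝ) ^ (α - 1)) ≤ α * n * (X + n) ^ (α - 1) :=
            mul_le_mul_of_nonneg_left h2n (by positivity)
          have hnn2 : α * (n:ℝ) * ((1/2) * (n:ℝ) ^ (α - 1)) = α/2 * (n:ℝ) ^ α := by
            rw [← hnn]; ring
          linarith
        have h5 : Real.exp (-(X + n) ^ α) ≤
            Real.exp (-X ^ α) * Real.exp (-(α/2 * (n:ℝ) ^ α)) := by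
          rw [← Real.exp_add]
          refine Real.exp_le_exp.2 ?_
          have e : -X ^ α + -(α/2 * (n:ℝ) ^ α) = -(X ^ α + α/2 * (n:ℝ) ^ α) := by ring
          rw [e]
          linarith
        have hA : (0:ℝ) ≤ Real.exp (-(t/2)) ^ n := by positivity
        nlinarith [Real.exp_pos (-X ^ α)]
    have hgsum := hgeo (t/2) (by linarith)
    have hABsum : Summable (fun n : ℕ =>
        Real.exp (-X ^ α) * (Real.exp (-(t/2)) ^ n + Real.exp (-(α/2 * (n:ℝ) ^ α)))) :=
      ((hgsum.add hCsum).mul_left _)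
    have step1 : S ≤ Real.exp (-X ^ α) * ((∑' n : ℕ, Real.exp (-(t/2)) ^ n) + C) := by
      have h := Summable.tsum_le_tsum hterm hSsum hABsum
      rwa [tsum_mul_left, Summable.tsum_add hgsum hCsum] at h
    have hgs : (∑' n : ℕ, Real.exp (-(t/2)) ^ n) ≤ 4 / t := by
      rw [tsum_geometric_of_lt_one (Real.exp_pos _).le
        (Real.exp_lt_one_iff.2 (by linarith))]
      have hb := one_sub_exp_bounds (s := t/2) (by linarith) (by linarith)
      have h4 : t/4 ≤ 1 - Real.exp (-(t/2)) := by linarith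
      calc (1 - Real.exp (-(t/2)))⁻¹ ≤ (t/4)⁻¹ := inv_anti₀ (by linarith) h4
        _ = 4 / t := by rw [inv_div]
    have hfin : (∑' n : ℕ, Real.exp (-(t/2)) ^ n) + C ≤ (4/α + C) * X ^ (1 - α) := by
      have h4t : 4 / t = 4 * (X ^ (1 - α) / α) := by
        rw [htinv]; ring
      have hCX : C ≤ C * X ^ (1 - α) := by nlinarith
      have : 4 * (X ^ (1 - α) / α) = 4/α * X ^ (1 - α) := by ring
      nlinarith [hgs]
    calc S ≤ Real.exp (-X ^ α) * ((∑' n : ℕ, Real.exp (-(t/2)) ^ n) + C) := step1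
      _ ≤ Real.exp (-X ^ α) * ((4/α + C) * X ^ (1 - α)) :=
          mul_le_mul_of_nonneg_left hfin (Real.exp_pos _).le
  -- assemble
  rw [hμt]
  have hE : 0 < X ^ (1 - α) * Real.exp (-X ^ α) := by positivity
  constructor
  · have h1 : Real.exp (-X ^ α) * (X ^ (1 - α) / α) / Z ≤ S / Z :=
      (div_le_div_iff_of_pos_right hZpos).2 lowerS
    have h2 : 1 / k * X ^ (1 - α) * Real.exp (-X ^ α) ≤
        Real.exp (-X ^ α) * (X ^ (1 - α) / α) / Z := by
      have hZα : 0 < Z * α := by positivity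
      have hkpos : (0:ℝ) < k := by linarith
      have hik : 1 / k ≤ 1 / (Z * α) := one_div_le_one_div_of_le hZα hkZα
      have heq : Real.exp (-X ^ α) * (X ^ (1 - α) / α) / Z
          = 1 / (Z * α) * X ^ (1 - α) * Real.exp (-X ^ α) := by
        field_simp
      rw [heq]
      have := mul_le_mul_of_nonneg_right hik hE.le
      calc 1 / k * X ^ (1 - α) * Real.exp (-X ^ α)
          = 1 / k * (X ^ (1 - α) * Real.exp (-X ^ α)) := by ring
        _ ≤ 1 / (Z * α) * (X ^ (1 - α) * Real.exp (-X ^ α)) := this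
        _ = 1 / (Z * α) * X ^ (1 - α) * Real.exp (-X ^ α) := by ring
    linarith
  · have h1 : S / Z ≤ Real.exp (-X ^ α) * ((4/α + C) * X ^ (1 - α)) / Z :=
      (div_le_div_iff_of_pos_right hZpos).2 upperS
    have heq : Real.exp (-X ^ α) * ((4/α + C) * X ^ (1 - α)) / Z
        = (4/α + C)/Z * (X ^ (1 - α) * Real.exp (-X ^ α)) := by
      field_simp
    have h2 := mul_le_mul_of_nonneg_right hkC hE.le
    calc S / Z ≤ Real.exp (-X ^ α) * ((4/α + C) * X ^ (1 - α)) / Z := h1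
      _ = (4/α + C)/Z * (X ^ (1 - α) * Real.exp (-X ^ α)) := heq
      _ ≤ k * (X ^ (1 - α) * Real.exp (-X ^ α)) := h2
      _ = k * X ^ (1 - α) * Real.exp (-X ^ α) := by ring
end

section
/- Let μ be a probability measure on a finite set L ⊆ ℝ^n-indexed product space satisfying a logarithmic Sobolev inequality with constant C. Suppose the entropy of the law of a Markov process at time 1 is bounded by a polynomial: Ent_μ(h_1) ≤ A·(1+n)^m, and entropy decays as Ent_μ(h_t) ≤ exp(−2(t−1)/C_n)·Ent_μ(h_1) with C_n ≤ C·n/log(n). If n = n(t) ∈ [ρt, ρt+1] for some ρ > 0 and C < 2/(ρ·m), then Ent_μ(h_t) → 0 as t → ∞. -/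
open Real Filter

/-- Quantitative uniqueness step: if log-Sobolev constants grow sublinearly,
`C_n ≤ C·n/log n`, the initial entropy is polynomially bounded, and the box size
scales linearly with time, `n(t) ∈ [ρt, ρt+1]`, then for `C < 2/(ρ·m)` the entropy
`E t ≤ exp(−2(t−1)/C_{n(t)})·A·(1+n(t))^m` tends to `0` as `t → ∞`. -/
theorem entropy_tends_to_zero (C ρ A : ℝ) (m : ℕ) (hρ : 0 < ρ) (hA : 0 < A)
    (hm : 1 ≤ m) (hC : 0 < C) (hCm : C < 2 / (ρ * m))
    (Cls : ℕ → ℝ) (hCls_pos : ∀ n, 0 < Cls n)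
    (hCls : ∀ n : ℕ, 2 ≤ n → Cls n ≤ C * n / Real.log n)
    (n : ℝ → ℕ) (hn : ∀ t : ℝ, 1 ≤ t → ρ * t ≤ (n t : ℝ) ∧ (n t : ℝ) ≤ ρ * t + 1)
    (E : ℝ → ℝ) (hE0 : ∀ t, 0 ≤ E t)
    (hE : ∀ t : ℝ, 1 ≤ t →
      E t ≤ Real.exp (-2 * (t - 1) / Cls (n t)) * (A * (1 + (n t : ℝ)) ^ m)) :
    Tendsto E atTop (nhds 0) := by
  have hCρ : 0 < C * ρ := mul_pos hC hρ
  set K : ℝ := 2 / (C * ρ) with hKdef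
  have hKCρ : K * (C * ρ) = 2 := div_mul_cancel₀ 2 (ne_of_gt hCρ)
  have hmpos : (0:ℝ) < m := by exact_mod_cast hm
  have hmK : (m : ℝ) < K := by
    have hρm : 0 < ρ * m := mul_pos hρ hmpos
    rw [lt_div_iff₀ hρm] at hCm
    rw [hKdef, lt_div_iff₀ hCρ]
    nlinarith
  set δ : ℝ := (K - m) / 2 with hδdef
  have hδ : 0 < δ := by simp only [hδdef]; linarith
  have hKm : K = m + 2 * δ := by simp only [hδdef]; ring
  -- n t → ∞
  have hnt : Tendsto (fun t => (n t : ℝ)) atTop atTop := by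
    apply tendsto_atTop_mono' atTop (eventually_atTop.2 ⟨1, fun t ht => (hn t ht).1⟩)
    exact Tendsto.const_mul_atTop hρ tendsto_id
  have hg : Tendsto (fun t => A * 2 ^ m * (n t : ℝ) ^ (-δ)) atTop (nhds 0) := by
    have h1 := (tendsto_rpow_neg_atTop hδ).comp hnt
    have := h1.const_mul (A * 2 ^ m)
    simpa using this
  apply squeeze_zero' (Eventually.of_forall hE0) ?_ hg
  have h1 : ∀ᶠ t : ℝ in atTop, 1 ≤ t := eventually_ge_atTop 1
  have h2 : ∀ᶠ t : ℝ in atTop, max 2 (K * (1 + ρ) / δ) ≤ (n t : ℝ) :=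
    hnt.eventually_ge_atTop _
  filter_upwards [h1, h2] with t ht1 ht2
  set N : ℝ := (n t : ℝ) with hNdef
  have hN2 : (2:ℝ) ≤ N := le_trans (le_max_left _ _) ht2
  have hNδ : K * (1 + ρ) / δ ≤ N := le_trans (le_max_right _ _) ht2
  have hNδ' : K * (1 + ρ) ≤ δ * N := by
    rw [div_le_iff₀ hδ] at hNδ; linarith
  have hlog : 0 < Real.log N := Real.log_pos (by linarith)
  have hN0 : 0 < N := by linarith
  have hn2 : 2 ≤ n t := by exact_mod_cast (show (2:ℝ) ≤ ((n t : ℕ) : ℝ) from hN2)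
  have hNt : N ≤ ρ * t + 1 := (hn t ht1).2
  -- key exponent inequality : ((m:ℝ) + δ) * Real.log N * Cls (n t) ≤ 2 * (t - 1)
  have hkey : ((m:ℝ) + δ) * Real.log N ≤ 2 * (t - 1) / Cls (n t) := by
    rw [le_div_iff₀ (hCls_pos (n t))]
    have hC1 : Cls (n t) ≤ C * N / Real.log N := hCls (n t) hn2
    have hmδ : (0:ℝ) < (m:ℝ) + δ := by positivity
    calc ((m:ℝ) + δ) * Real.log N * Cls (n t)
        ≤ ((m:ℝ) + δ) * Real.log N * (C * N / Real.log N) := by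
          apply mul_le_mul_of_nonneg_left hC1 (by positivity)
      _ = ((m:ℝ) + δ) * (C * N) := by field_simp
      _ ≤ 2 * (t - 1) := by
          have h2N : K * (C * ρ) * N = 2 * N := by rw [hKCρ]
          have hq : C * ρ * (K * (1 + ρ)) ≤ C * ρ * (δ * N) :=
            mul_le_mul_of_nonneg_left hNδ' hCρ.le
          have hCK : C * ρ * (K * (1 + ρ)) = 2 * (1 + ρ) := by
            linear_combination (1 + ρ) * hKCρ
          have e1 : ρ * (((m:ℝ) + δ) * (C * N)) = 2 * N - C * ρ * (δ * N) := by
            linear_combination N * hKCρ - C * ρ * N * hKm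
          have e2 : 2 * (1 + ρ) ≤ C * ρ * (δ * N) := by linarith
          have e3 : ρ * (((m:ℝ) + δ) * (C * N)) ≤ ρ * (2 * (t - 1)) := by nlinarith
          exact le_of_mul_le_mul_left e3 hρ
  -- chain
  have hexp : Real.exp (-2 * (t - 1) / Cls (n t)) ≤ N ^ (-(((m:ℝ) + δ))) := by
    rw [Real.rpow_def_of_pos hN0]
    apply Real.exp_le_exp.2
    have : -2 * (t-1) / Cls (n t) = -(2 * (t-1) / Cls (n t)) := by ring
    rw [this]
    nlinarith [hkey]
  have hpow : (1 + N) ^ m ≤ 2 ^ m * N ^ m := by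
    rw [← mul_pow]
    exact pow_le_pow_left₀ (by linarith) (by linarith) m
  calc E t ≤ Real.exp (-2 * (t - 1) / Cls (n t)) * (A * (1 + N) ^ m) := hE t ht1
    _ ≤ N ^ (-(((m:ℝ) + δ))) * (A * (2 ^ m * N ^ m)) := by
        apply mul_le_mul hexp (by nlinarith [pow_nonneg (by linarith : (0:ℝ) ≤ 1 + N) m])
          (by positivity) (by positivity)
    _ = A * 2 ^ m * (N ^ (-(((m:ℝ) + δ))) * N ^ ((m:ℕ):ℝ)) := by
        rw [Real.rpow_natCast]; ring
    _ = A * 2 ^ m * N ^ (-δ) := by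
        rw [← Real.rpow_add hN0]; ring_nf
end
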